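/- arXiv:1204.5838 — 2 statements merged into one kernel-verified Lean document; each statement's English description precedes it below -/
import Mathlib

section
/- If (M,P,g) is a W̄₃-manifold of dimension 2n with closed 1-form θ, then the Riemannian P-tensor K(x,y,z,w) = (1/2){R(x,y,z,w) + R(x,y,Pz,Pw)} equals R - (1/4n){(ψ₁-ψ₂)(A) + (θ(Ω)/2n)(π₁-π₂)}, where A(y,z) = (∇_y θ)z - (1/2n)θ(y)θ(z). -/
open scoped BigOperators

/-- An abstract (local) model of a Riemannian almost product manifold of
dimension `n`: `V` plays the role of the module of smooth vector fields over
the commutative ℝ-algebra `C` of smooth functions, `g` is the Riemannian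
metric, `P` the almost product structure, `D` the directional derivative of
functions, `bracket` the Lie bracket of vector fields, `nabla` the
Levi-Civita connection of `g`, and `e`, `e'` a frame together with its
`g`-reciprocal frame (used to form traces `g^{ij}·`). -/
structure RAPM (n : ℕ) where
  V : Type
  C : Type
  [instAG : AddCommGroup V]
  [instCR : CommRing C]
  [instAlg : Algebra ℝ C]
  [instMod : Module C V]
  g : V →ₗ[C] V →ₗ[C] C
  P : V →ₗ[C] V
  gSymm : ∀ x y, g x y = g y x
  Pinvol : ∀ x, P (P x) = x
  Piso : ∀ x y, g (P x) (P y) = g x y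
  D : V → C → C
  Dadd : ∀ x f h, D x (f + h) = D x f + D x h
  bracket : V → V → V
  bracketD : ∀ x y f, D (bracket x y) f = D x (D y f) - D y (D x f)
  jacobi : ∀ x y z,
    bracket x (bracket y z) + bracket y (bracket z x) + bracket z (bracket x y) = 0
  nabla : V → V → V
  nabla_add₁ : ∀ x y z, nabla (x + y) z = nabla x z + nabla y z
  nabla_smul₁ : ∀ (f : C) x y, nabla (f • x) y = f • nabla x y
  nabla_add₂ : ∀ x y z, nabla x (y + z) = nabla x y + nabla x z
  nabla_leibniz : ∀ x (f : C) y, nabla x (f • y) = D x f • y + f • nabla x y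
  nabla_metric : ∀ x y z, D x (g y z) = g (nabla x y) z + g y (nabla x z)
  torsion_free : ∀ x y, nabla x y - nabla y x = bracket x y
  e : Fin n → V
  e' : Fin n → V
  dual_frame : ∀ i j, g (e' i) (e j) = if i = j then 1 else 0
  frame_span : ∀ v : V, v = ∑ i, g (e' i) v • e i

namespace RAPM

attribute [instance] RAPM.instAG RAPM.instCR RAPM.instAlg RAPM.instMod

variable {n : ℕ} (Q : RAPM n)

/-- The fundamental tensor `F(x,y,z) = g((∇ₓP)y, z)`. -/
def F (x y z : Q.V) : Q.C := Q.g (Q.nabla x (Q.P y) - Q.P (Q.nabla x y)) z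

/-- The curvature operator `R(x,y)z`. -/
def R (x y z : Q.V) : Q.V :=
  Q.nabla x (Q.nabla y z) - Q.nabla y (Q.nabla x z) - Q.nabla (Q.bracket x y) z

/-- The (0,4) curvature tensor `R(x,y,z,w) = g(R(x,y)z, w)`. -/
def Rm (x y z w : Q.V) : Q.C := Q.g (Q.R x y z) w

/-- `tr P = g^{ij} g(e_i, P e_j)`. -/
def trP : Q.C := ∑ i, Q.g (Q.e' i) (Q.P (Q.e i))

/-- The Lee form `θ(x) = g^{ij} F(e_i, e_j, x)`. -/
def theta (x : Q.V) : Q.C := ∑ i, Q.F (Q.e' i) (Q.e i) x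

/-- The covariant derivative `(∇ₓθ)y`. -/
def nablaTheta (x y : Q.V) : Q.C := Q.D x (Q.theta y) - Q.theta (Q.nabla x y)

/-- `θ` is closed iff `(∇ₓθ)y = (∇_yθ)x`. -/
def closed : Prop := ∀ x y, Q.nablaTheta x y = Q.nablaTheta y x

/-- The covariant derivative `(∇ₓF)(y,z,w)`. -/
def nablaF (x y z w : Q.V) : Q.C :=
  Q.D x (Q.F y z w) - Q.F (Q.nabla x y) z w - Q.F y (Q.nabla x z) w
    - Q.F y z (Q.nabla x w)

def psi1 (S : Q.V → Q.V → Q.C) (x y z w : Q.V) : Q.C :=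
  Q.g y z * S x w - Q.g x z * S y w + S y z * Q.g x w - S x z * Q.g y w

def psi2 (S : Q.V → Q.V → Q.C) (x y z w : Q.V) : Q.C :=
  Q.psi1 S x y (Q.P z) (Q.P w)

/-- The associated metric `g̃(x,y) = g(x,Py)`. -/
def gP (x y : Q.V) : Q.C := Q.g x (Q.P y)

noncomputable def pi1 (x y z w : Q.V) : Q.C :=
  ((1 : ℝ)/2) • Q.psi1 (fun a b => Q.g a b) x y z w

noncomputable def pi2 (x y z w : Q.V) : Q.C :=
  ((1 : ℝ)/2) • Q.psi2 (fun a b => Q.g a b) x y z w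

def pi3 (x y z w : Q.V) : Q.C := Q.psi1 Q.gP x y z w

/-- The Ricci tensor `ρ(L)(y,z) = g^{ij} L(e_i,y,z,e_j)` of a (0,4)-tensor. -/
def ric (L : Q.V → Q.V → Q.V → Q.V → Q.C) (y z : Q.V) : Q.C :=
  ∑ i, L (Q.e' i) y z (Q.e i)

/-- The scalar curvature `τ(L) = g^{ij} ρ(L)(e_i,e_j)`. -/
def scal (L : Q.V → Q.V → Q.V → Q.V → Q.C) : Q.C := ∑ i, Q.ric L (Q.e i) (Q.e' i)

/-- The associated Ricci tensor `ρ*(L)(y,z) = g^{ij} L(e_i,y,z,Pe_j)`. -/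
def ricStar (L : Q.V → Q.V → Q.V → Q.V → Q.C) (y z : Q.V) : Q.C :=
  ∑ i, L (Q.e' i) y z (Q.P (Q.e i))

/-- The associated scalar curvature `τ*(L)`. -/
def scalStar (L : Q.V → Q.V → Q.V → Q.V → Q.C) : Q.C :=
  ∑ i, Q.ricStar L (Q.e i) (Q.e' i)

/-- The trace `g^{ij} S(e_i,e_j)` of a (0,2)-tensor. -/
def trB (S : Q.V → Q.V → Q.C) : Q.C := ∑ i, S (Q.e i) (Q.e' i)

/-- The divergence of a vector field. -/
def divg (v : Q.V) : Q.C := ∑ i, Q.g (Q.e' i) (Q.nabla (Q.e i) v)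

/-- A curvature-like tensor. -/
def curvatureLike (L : Q.V → Q.V → Q.V → Q.V → Q.C) : Prop :=
  (∀ x y z w, L x y z w = - L y x z w) ∧
  (∀ x y z w, L x y z w = - L x y w z) ∧
  (∀ x y z w, L x y z w + L y z x w + L z x y w = 0)

/-- A Riemannian P-tensor. -/
def isPtensor (L : Q.V → Q.V → Q.V → Q.V → Q.C) : Prop :=
  Q.curvatureLike L ∧ ∀ x y z w, L x y (Q.P z) (Q.P w) = L x y z w

/-- The defining condition of the Naveira class `W̄₃` (dimension `n`, so the
factor `1/(2n)` of the paper is `1/n` here). -/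
def W3 : Prop :=
  (∀ x y z, Q.F x y z =
    ((1 : ℝ)/(n : ℝ)) • ((Q.g x y + Q.g x (Q.P y)) * Q.theta z +
      (Q.g x z + Q.g x (Q.P z)) * Q.theta y)) ∧
  (∀ x, Q.theta (Q.P x) = - Q.theta x)

/-- The defining condition of the Naveira class `W̄₆`. -/
def W6 : Prop :=
  (∀ x y z, Q.F x y z =
    ((1 : ℝ)/(n : ℝ)) • ((Q.g x y - Q.g x (Q.P y)) * Q.theta z +
      (Q.g x z - Q.g x (Q.P z)) * Q.theta y)) ∧
  (∀ x, Q.theta (Q.P x) = Q.theta x)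

end RAPM


namespace RAPM

variable {m : ℕ} (Q : RAPM m)

/-- `D x` as an additive monoid hom. -/
def Dh (x : Q.V) : Q.C →+ Q.C := AddMonoidHom.mk' (Q.D x) (Q.Dadd x)

/-- `fun x => nabla x v` as an additive monoid hom. -/
def nh1 (v : Q.V) : Q.V →+ Q.V :=
  AddMonoidHom.mk' (fun x => Q.nabla x v) (fun a b => Q.nabla_add₁ a b v)

/-- `nabla x` as an additive monoid hom. -/
def nh2 (x : Q.V) : Q.V →+ Q.V := AddMonoidHom.mk' (Q.nabla x) (Q.nabla_add₂ x)

lemma nabla_sub₁ (a b v : Q.V) :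
    Q.nabla (a - b) v = Q.nabla a v - Q.nabla b v := by
  simpa [nh1] using (Q.nh1 v).map_sub a b

lemma nabla_sub₂ (x a b : Q.V) :
    Q.nabla x (a - b) = Q.nabla x a - Q.nabla x b := by
  simpa [nh2] using (Q.nh2 x).map_sub a b

lemma nabla_neg₁ (a v : Q.V) : Q.nabla (-a) v = - Q.nabla a v := by
  simpa [nh1] using (Q.nh1 v).map_neg a

lemma D_nsmul (x : Q.V) (p : ℕ) (f : Q.C) : Q.D x (p • f) = p • Q.D x f := by
  simpa [Dh] using (Q.Dh x).map_nsmul p f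

lemma D_inv_smul (x : Q.V) (p : ℕ) (hp : (p:ℝ) ≠ 0) (f : Q.C) :
    Q.D x (((1:ℝ)/(p:ℝ)) • f) = ((1:ℝ)/(p:ℝ)) • Q.D x f := by
  have h1 : (p:ℕ) • (((1:ℝ)/(p:ℝ)) • f) = f := by
    rw [← Nat.cast_smul_eq_nsmul ℝ, smul_smul, mul_one_div, div_self hp, one_smul]
  have e1 : Q.D x f = p • Q.D x (((1:ℝ)/(p:ℝ)) • f) := by
    conv_lhs => rw [← h1]
    exact Q.D_nsmul x p _
  rw [e1, ← Nat.cast_smul_eq_nsmul ℝ, smul_smul, one_div, inv_mul_cancel₀ hp,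
    one_smul]

lemma D_mul_g (x : Q.V) (f : Q.C) (a b : Q.V) :
    Q.D x (f * Q.g a b) = Q.D x f * Q.g a b + f * Q.D x (Q.g a b) := by
  have h1 := Q.nabla_metric x (f • a) b
  rw [Q.nabla_leibniz] at h1
  simp only [map_smul, LinearMap.smul_apply, map_add, LinearMap.add_apply,
    smul_eq_mul] at h1
  rw [h1, Q.nabla_metric x a b]
  ring

lemma bracket_neg (x y : Q.V) : Q.bracket y x = - Q.bracket x y := by
  rw [← Q.torsion_free, ← Q.torsion_free]; abel

lemma R_swap (x y z : Q.V) : Q.R y x z = - Q.R x y z := by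
  unfold RAPM.R
  rw [Q.bracket_neg, Q.nabla_neg₁]
  abel

lemma Rm_swap₁₂ (x y z w : Q.V) : Q.Rm x y z w = - Q.Rm y x z w := by
  unfold RAPM.Rm
  rw [Q.R_swap]
  simp

lemma Rm_swap₃₄ (x y z w : Q.V) : Q.Rm x y z w = - Q.Rm x y w z := by
  have e1 : Q.D x (Q.D y (Q.g z w)) =
      Q.g (Q.nabla x (Q.nabla y z)) w + Q.g (Q.nabla y z) (Q.nabla x w) +
      Q.g (Q.nabla x z) (Q.nabla y w) + Q.g z (Q.nabla x (Q.nabla y w)) := by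
    rw [Q.nabla_metric y, Q.Dadd, Q.nabla_metric x, Q.nabla_metric x]
    ring
  have e2 : Q.D y (Q.D x (Q.g z w)) =
      Q.g (Q.nabla y (Q.nabla x z)) w + Q.g (Q.nabla x z) (Q.nabla y w) +
      Q.g (Q.nabla y z) (Q.nabla x w) + Q.g z (Q.nabla y (Q.nabla x w)) := by
    rw [Q.nabla_metric x, Q.Dadd, Q.nabla_metric y, Q.nabla_metric y]
    ring
  have hb := Q.bracketD x y (Q.g z w)
  rw [e1, e2, Q.nabla_metric (Q.bracket x y) z w] at hb
  have hzero : Q.g (Q.R x y z) w + Q.g z (Q.R x y w) = 0 := by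
    unfold RAPM.R
    simp only [map_sub, LinearMap.sub_apply]
    linear_combination -hb
  unfold RAPM.Rm
  have := hzero
  rw [Q.gSymm z (Q.R x y w)] at this
  linear_combination this

lemma Rm_bianchi (x y z w : Q.V) :
    Q.Rm x y z w + Q.Rm y z x w + Q.Rm z x y w = 0 := by
  have key : Q.R x y z + Q.R y z x + Q.R z x y =
      Q.bracket x (Q.bracket y z) + Q.bracket y (Q.bracket z x) +
      Q.bracket z (Q.bracket x y) := by
    unfold RAPM.R
    simp only [← Q.torsion_free, Q.nabla_sub₁, Q.nabla_sub₂]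
    abel
  unfold RAPM.Rm
  have : Q.g (Q.R x y z + Q.R y z x + Q.R z x y) w = Q.g 0 w := by
    rw [key, Q.jacobi]
  simpa [map_add, LinearMap.add_apply] using this

/-- The fundamental second-order identity:
`Rm(x,y,Pz,Pw) - Rm(x,y,z,w) = (∇ₓF)(y,z,Pw) - (∇_yF)(x,z,Pw)`. -/
lemma Rm_P_diff (x y z w : Q.V) :
    Q.Rm x y (Q.P z) (Q.P w) - Q.Rm x y z w =
      Q.nablaF x y z (Q.P w) - Q.nablaF y x z (Q.P w) := by
  set NP : Q.V → Q.V → Q.V := fun a b => Q.nabla a (Q.P b) - Q.P (Q.nabla a b)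
    with hNP
  have key : ∀ a b w', Q.nablaF a b z w' =
      Q.g (Q.nabla a (NP b z) - NP (Q.nabla a b) z - NP b (Q.nabla a z)) w' := by
    intro a b w'
    have hf : ∀ u v s, Q.F u v s = Q.g (NP u v) s := fun _ _ _ => rfl
    unfold RAPM.nablaF
    rw [hf, hf, hf, hf, Q.nabla_metric a (NP b z) w']
    simp only [map_sub, LinearMap.sub_apply]
    ring
  have hop : Q.nabla x (NP y z) - NP (Q.nabla x y) z - NP y (Q.nabla x z) -
      (Q.nabla y (NP x z) - NP (Q.nabla y x) z - NP x (Q.nabla y z)) =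
      Q.R x y (Q.P z) - Q.P (Q.R x y z) := by
    unfold RAPM.R
    rw [← Q.torsion_free x y]
    simp only [hNP, Q.nabla_sub₁, Q.nabla_sub₂, map_sub]
    abel
  rw [key x y (Q.P w), key y x (Q.P w)]
  have hg : Q.Rm x y z w = Q.g (Q.P (Q.R x y z)) (Q.P w) := by
    unfold RAPM.Rm
    rw [Q.Piso]
  rw [hg]
  unfold RAPM.Rm
  have hgop := congrArg (fun v => Q.g v (Q.P w)) hop
  simp only [map_sub, LinearMap.sub_apply] at hgop ⊢
  linear_combination -hgop


lemma psi1_cyc (S : Q.V → Q.V → Q.C) (hS : ∀ u v, S u v = S v u) (x y z w : Q.V) :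
    Q.psi1 S x y z w + Q.psi1 S y z x w + Q.psi1 S z x y w = 0 := by
  simp only [RAPM.psi1]
  linear_combination S x w * Q.gSymm y z + S y w * Q.gSymm z x +
    S z w * Q.gSymm x y + Q.g x w * hS y z + Q.g y w * hS z x + Q.g z w * hS x y

lemma gtSymm (u v : Q.V) : Q.g u (Q.P v) = Q.g v (Q.P u) := by
  rw [← Q.Piso u (Q.P v), Q.Pinvol, Q.gSymm]

lemma psi2_cyc (S : Q.V → Q.V → Q.C) (hS : ∀ u v, S u (Q.P v) = S v (Q.P u))
    (x y z w : Q.V) :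
    Q.psi2 S x y z w + Q.psi2 S y z x w + Q.psi2 S z x y w = 0 := by
  simp only [RAPM.psi2, RAPM.psi1]
  linear_combination S x (Q.P w) * Q.gtSymm y z + S y (Q.P w) * Q.gtSymm z x +
    S z (Q.P w) * Q.gtSymm x y + Q.g x (Q.P w) * hS y z +
    Q.g y (Q.P w) * hS z x + Q.g z (Q.P w) * hS x y

end RAPM

open RAPM in
/-- On a `W̄₃`-manifold of dimension `2n` with closed `θ`, the Riemannian
P-tensor `K = (1/2){R + R(·,·,P·,P·)}` equals
`R - (1/4n){(ψ₁-ψ₂)(A) + (θ(Ω)/2n)(π₁-π₂)}`. -/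
theorem statement13 {n : ℕ} (hn : 0 < n) (Q : RAPM (2*n)) (htr : Q.trP = 0)
    (hW : Q.W3) (hθ : Q.closed) (Ω : Q.V) (hΩ : ∀ x, Q.g Ω x = Q.theta x)
    (A : Q.V → Q.V → Q.C)
    (hA : ∀ y z, A y z =
      Q.nablaTheta y z - ((1 : ℝ)/(2*(n : ℝ))) • (Q.theta y * Q.theta z))
    (K : Q.V → Q.V → Q.V → Q.V → Q.C)
    (hK : ∀ x y z w, K x y z w =
      ((1 : ℝ)/2) • (Q.Rm x y z w + Q.Rm x y (Q.P z) (Q.P w))) :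
    Q.isPtensor K ∧
    ∀ x y z w, K x y z w =
      Q.Rm x y z w - ((1 : ℝ)/(4*(n : ℝ))) •
        (Q.psi1 A x y z w - Q.psi2 A x y z w +
          ((1 : ℝ)/(2*(n : ℝ))) •
            (Q.theta Ω * (Q.pi1 x y z w - Q.pi2 x y z w))) := by
  have hn' : ((n:ℕ) : ℝ) ≠ 0 := Nat.cast_ne_zero.mpr hn.ne'
  have hm : ((2*n : ℕ) : ℝ) ≠ 0 := Nat.cast_ne_zero.mpr (by omega)
  -- scalar conversion lemmas
  have hs1 : ∀ X : Q.C, ((1:ℝ)/(2*(n:ℝ))) • X = algebraMap ℝ Q.C ((1:ℝ)/((2*n : ℕ) : ℝ)) * X := by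
    intro X
    rw [show (1:ℝ)/(2*(n:ℝ)) = (1:ℝ)/((2*n : ℕ) : ℝ) by push_cast; ring,
      Algebra.smul_def]
  have hs2 : ∀ X : Q.C, ((1:ℝ)/(4*(n:ℝ))) • X = algebraMap ℝ Q.C ((1:ℝ)/2) * (algebraMap ℝ Q.C ((1:ℝ)/((2*n : ℕ) : ℝ)) * X) := by
    intro X
    rw [show (1:ℝ)/(4*(n:ℝ)) = ((1:ℝ)/2) * ((1:ℝ)/((2*n : ℕ) : ℝ)) by
        push_cast; field_simp; ring,
      mul_smul, Algebra.smul_def, Algebra.smul_def]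
  have h2half : algebraMap ℝ Q.C ((1:ℝ)/2) + algebraMap ℝ Q.C ((1:ℝ)/2) = 1 := by
    rw [← map_add]
    norm_num
  -- theta basics
  have tP : ∀ u, Q.theta (Q.P u) = - Q.theta u := hW.2
  have tadd : ∀ a b, Q.theta (a + b) = Q.theta a + Q.theta b := by
    intro a b; rw [← hΩ, ← hΩ, ← hΩ, map_add]
  have hgΩ : ∀ u, Q.g u Ω = Q.theta u := by intro u; rw [Q.gSymm, hΩ]
  have hgPΩ : ∀ u, Q.g u (Q.P Ω) = - Q.theta u := by
    intro u; rw [Q.gtSymm u Ω, hΩ, tP]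
  have hDneg : ∀ u (f : Q.C), Q.D u (-f) = - Q.D u f := fun u f => by
    simpa [RAPM.Dh] using (Q.Dh u).map_neg f
  -- F in k-form
  have hW1' : ∀ x y z, Q.F x y z =
      algebraMap ℝ Q.C ((1:ℝ)/((2*n : ℕ) : ℝ)) * ((Q.g x y + Q.g x (Q.P y)) * Q.theta z +
        (Q.g x z + Q.g x (Q.P z)) * Q.theta y) := by
    intro x y z; rw [hW.1, Algebra.smul_def]
  -- theta of (∇ₓP)y
  have hFΩ : ∀ u v, Q.theta (Q.nabla u (Q.P v) - Q.P (Q.nabla u v)) =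
      algebraMap ℝ Q.C ((1:ℝ)/((2*n : ℕ) : ℝ)) * ((Q.g u v + Q.g u (Q.P v)) * Q.theta Ω) := by
    intro u v
    have h1 : Q.theta (Q.nabla u (Q.P v) - Q.P (Q.nabla u v)) = Q.F u v Ω := by
      rw [← hΩ, Q.gSymm]; rfl
    rw [h1, hW1' u v Ω, hgΩ, hgPΩ]
    ring
  -- ∇θ(u, Pv)
  have hNPw : ∀ u v, Q.nablaTheta u (Q.P v) =
      - Q.nablaTheta u v - algebraMap ℝ Q.C ((1:ℝ)/((2*n : ℕ) : ℝ)) * ((Q.g u v + Q.g u (Q.P v)) * Q.theta Ω) := by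
    intro u v
    unfold RAPM.nablaTheta
    rw [tP v, hDneg]
    have h2 : Q.nabla u (Q.P v) =
        (Q.nabla u (Q.P v) - Q.P (Q.nabla u v)) + Q.P (Q.nabla u v) := by abel
    rw [h2, tadd, hFΩ, tP]
    ring
  -- derivative helpers
  have hDθ : ∀ a s, Q.D a (Q.theta s) =
      Q.nablaTheta a s + Q.theta (Q.nabla a s) := by
    intro a s; unfold RAPM.nablaTheta; ring
  have hDmulθ : ∀ a (f : Q.C) s, Q.D a (f * Q.theta s) =
      Q.D a f * Q.theta s + f * Q.D a (Q.theta s) := by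
    intro a f s; rw [← hΩ s]; exact Q.D_mul_g a f Ω s
  have hsplit : ∀ a b s, Q.g s (Q.nabla a (Q.P b)) =
      Q.F a b s + Q.g s (Q.P (Q.nabla a b)) := by
    intro a b s
    have h3 : Q.F a b s = Q.g (Q.nabla a (Q.P b)) s - Q.g (Q.P (Q.nabla a b)) s := by
      unfold RAPM.F; simp [map_sub, LinearMap.sub_apply]
    rw [h3, Q.gSymm s, Q.gSymm s]; ring
  -- the ∇F formula in class W3
  have hnF : ∀ x y z w, Q.nablaF x y z w =
      algebraMap ℝ Q.C ((1:ℝ)/((2*n : ℕ) : ℝ)) * ((Q.g y z + Q.g y (Q.P z)) * Q.nablaTheta x w +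
        Q.F x z y * Q.theta w + (Q.g y w + Q.g y (Q.P w)) * Q.nablaTheta x z +
        Q.F x w y * Q.theta z) := by
    intro x y z w
    unfold RAPM.nablaF
    rw [hW.1 y z w, hW.1 (Q.nabla x y) z w, hW.1 y (Q.nabla x z) w,
      hW.1 y z (Q.nabla x w), Q.D_inv_smul x (2*n) hm]
    simp only [Q.Dadd, hDmulθ, hDθ, Q.nabla_metric, hsplit]
    simp only [Algebra.smul_def]
    ring
  -- A in k-form
  have hA' : ∀ u v, A u v = Q.nablaTheta u v - algebraMap ℝ Q.C ((1:ℝ)/((2*n : ℕ) : ℝ)) * (Q.theta u * Q.theta v) := by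
    intro u v; rw [hA, hs1]
  -- the core identity
  have core : ∀ x y z w, Q.Rm x y (Q.P z) (Q.P w) - Q.Rm x y z w =
      -(algebraMap ℝ Q.C ((1:ℝ)/((2*n : ℕ) : ℝ)) * ((Q.psi1 A x y z w - Q.psi2 A x y z w) +
        algebraMap ℝ Q.C ((1:ℝ)/((2*n : ℕ) : ℝ)) * (Q.theta Ω *
          ((Q.g y z * Q.g x w - Q.g x z * Q.g y w) -
           (Q.g y (Q.P z) * Q.g x (Q.P w) - Q.g x (Q.P z) * Q.g y (Q.P w)))))) := by
    intro x y z w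
    rw [Q.Rm_P_diff, hnF, hnF]
    simp only [RAPM.psi2, RAPM.psi1, hA', hW1', Q.Pinvol, tP, hNPw]
    linear_combination (2 * (algebraMap ℝ Q.C ((1:ℝ)/((2*n : ℕ) : ℝ)))^2 * Q.theta z * Q.theta w) * Q.gSymm y x +
      (2 * (algebraMap ℝ Q.C ((1:ℝ)/((2*n : ℕ) : ℝ)))^2 * Q.theta z * Q.theta w) * Q.gtSymm y x
  -- pi1 - pi2 explicitly
  have hpi : ∀ x y z w, Q.pi1 x y z w - Q.pi2 x y z w =
      (Q.g y z * Q.g x w - Q.g x z * Q.g y w) -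
      (Q.g y (Q.P z) * Q.g x (Q.P w) - Q.g x (Q.P z) * Q.g y (Q.P w)) := by
    intro x y z w
    have h1 : Q.pi1 x y z w = Q.g y z * Q.g x w - Q.g x z * Q.g y w := by
      simp only [RAPM.pi1, RAPM.psi1]
      rw [show (Q.g y z * Q.g x w - Q.g x z * Q.g y w + Q.g y z * Q.g x w -
          Q.g x z * Q.g y w : Q.C) =
          (Q.g y z * Q.g x w - Q.g x z * Q.g y w) +
          (Q.g y z * Q.g x w - Q.g x z * Q.g y w) by ring,
        ← two_smul ℝ, smul_smul, show ((1:ℝ)/2 * 2) = 1 by norm_num, one_smul]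
    have h2 : Q.pi2 x y z w =
        Q.g y (Q.P z) * Q.g x (Q.P w) - Q.g x (Q.P z) * Q.g y (Q.P w) := by
      simp only [RAPM.pi2, RAPM.psi2, RAPM.psi1]
      rw [show (Q.g y (Q.P z) * Q.g x (Q.P w) - Q.g x (Q.P z) * Q.g y (Q.P w) +
          Q.g y (Q.P z) * Q.g x (Q.P w) - Q.g x (Q.P z) * Q.g y (Q.P w) : Q.C) =
          (Q.g y (Q.P z) * Q.g x (Q.P w) - Q.g x (Q.P z) * Q.g y (Q.P w)) +
          (Q.g y (Q.P z) * Q.g x (Q.P w) - Q.g x (Q.P z) * Q.g y (Q.P w)) by ring,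
        ← two_smul ℝ, smul_smul, show ((1:ℝ)/2 * 2) = 1 by norm_num, one_smul]
    rw [h1, h2]
  -- the main formula
  have main : ∀ x y z w, K x y z w =
      Q.Rm x y z w - ((1 : ℝ)/(4*(n : ℝ))) •
        (Q.psi1 A x y z w - Q.psi2 A x y z w +
          ((1 : ℝ)/(2*(n : ℝ))) •
            (Q.theta Ω * (Q.pi1 x y z w - Q.pi2 x y z w))) := by
    intro x y z w
    rw [hK, hpi x y z w, hs1, hs2, Algebra.smul_def]
    linear_combination (algebraMap ℝ Q.C ((1:ℝ)/2)) * core x y z w + Q.Rm x y z w * h2half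
  -- symmetry of A and of A(·,P·)
  have hAsymm : ∀ u v, A u v = A v u := by
    intro u v
    rw [hA, hA, hθ u v, mul_comm (Q.theta u) (Q.theta v)]
  have hAtsymm : ∀ u v, A u (Q.P v) = A v (Q.P u) := by
    intro u v
    rw [hA', hA', tP, tP, hNPw, hNPw]
    linear_combination -hθ u v - (algebraMap ℝ Q.C ((1:ℝ)/((2*n : ℕ) : ℝ)) * Q.theta Ω) * Q.gSymm u v -
      (algebraMap ℝ Q.C ((1:ℝ)/((2*n : ℕ) : ℝ)) * Q.theta Ω) * Q.gtSymm u v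
  refine ⟨⟨⟨?_, ?_, ?_⟩, ?_⟩, main⟩
  · intro x y z w
    rw [hK x y z w, hK y x z w, Q.Rm_swap₁₂ x y z w,
      Q.Rm_swap₁₂ x y (Q.P z) (Q.P w)]
    simp only [Algebra.smul_def]
    ring
  · intro x y z w
    rw [hK x y z w, hK x y w z, Q.Rm_swap₃₄ x y z w,
      Q.Rm_swap₃₄ x y (Q.P z) (Q.P w)]
    simp only [Algebra.smul_def]
    ring
  · intro x y z w
    have hψ1 := Q.psi1_cyc A hAsymm x y z w
    have hψ2 := Q.psi2_cyc A hAtsymm x y z w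
    have hπ1 := Q.psi1_cyc (fun a b => Q.g a b) (fun u v => Q.gSymm u v) x y z w
    have hπ2 := Q.psi2_cyc (fun a b => Q.g a b) (fun u v => Q.gtSymm u v) x y z w
    have hπ1' : Q.pi1 x y z w + Q.pi1 y z x w + Q.pi1 z x y w = 0 := by
      simp only [RAPM.pi1, ← smul_add]
      rw [hπ1, smul_zero]
    have hπ2' : Q.pi2 x y z w + Q.pi2 y z x w + Q.pi2 z x y w = 0 := by
      simp only [RAPM.pi2, ← smul_add]
      rw [hπ2, smul_zero]
    rw [main x y z w, main y z x w, main z x y w]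
    simp only [hs2, hs1]
    linear_combination Q.Rm_bianchi x y z w - (algebraMap ℝ Q.C ((1:ℝ)/2) * algebraMap ℝ Q.C ((1:ℝ)/((2*n : ℕ) : ℝ))) * hψ1 +
      (algebraMap ℝ Q.C ((1:ℝ)/2) * algebraMap ℝ Q.C ((1:ℝ)/((2*n : ℕ) : ℝ))) * hψ2 -
      (algebraMap ℝ Q.C ((1:ℝ)/2) * algebraMap ℝ Q.C ((1:ℝ)/((2*n : ℕ) : ℝ)) * algebraMap ℝ Q.C ((1:ℝ)/((2*n : ℕ) : ℝ)) * Q.theta Ω) * hπ1' +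
      (algebraMap ℝ Q.C ((1:ℝ)/2) * algebraMap ℝ Q.C ((1:ℝ)/((2*n : ℕ) : ℝ)) * algebraMap ℝ Q.C ((1:ℝ)/((2*n : ℕ) : ℝ)) * Q.theta Ω) * hπ2'
  · intro x y z w
    rw [hK x y z w, hK x y (Q.P z) (Q.P w), Q.Pinvol, Q.Pinvol, add_comm]
end

section
/- Let (M,P,g) be a W̄₃-manifold of dimension 2n with closed 1-form θ. Then the curvature tensor R is a Riemannian P-tensor if and only if A(y,z) = -(θ(Ω)/4n)[g(y,z) + g(y,Pz)] for all y,z, where A(y,z) = (∇_y θ)z - (1/2n)θ(y)θ(z). -/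
open scoped BigOperators

namespace RAPMaux
open RAPM

variable {m : ℕ} (Q : RAPM m)

lemma nzero1 (z : Q.V) : Q.nabla 0 z = 0 := by
  have h := Q.nabla_add₁ 0 0 z
  rw [add_zero] at h
  exact left_eq_add.mp h

lemma nneg1 (v z : Q.V) : Q.nabla (-v) z = -(Q.nabla v z) := by
  have h := Q.nabla_add₁ v (-v) z
  rw [add_neg_cancel, nzero1] at h
  exact (neg_eq_of_add_eq_zero_right h.symm).symm

lemma nsub1 (u v z : Q.V) : Q.nabla (u - v) z = Q.nabla u z - Q.nabla v z := by
  rw [sub_eq_add_neg, Q.nabla_add₁, nneg1, sub_eq_add_neg]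

lemma nzero2 (x : Q.V) : Q.nabla x 0 = 0 := by
  have h := Q.nabla_add₂ x 0 0
  rw [add_zero] at h
  exact left_eq_add.mp h

lemma nneg2 (x v : Q.V) : Q.nabla x (-v) = -(Q.nabla x v) := by
  have h := Q.nabla_add₂ x v (-v)
  rw [add_neg_cancel, nzero2] at h
  exact (neg_eq_of_add_eq_zero_right h.symm).symm

lemma nsub2 (x u v : Q.V) : Q.nabla x (u - v) = Q.nabla x u - Q.nabla x v := by
  rw [sub_eq_add_neg, Q.nabla_add₂, nneg2, sub_eq_add_neg]

lemma Dzero (x : Q.V) : Q.D x 0 = 0 := by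
  have h := Q.Dadd x 0 0
  rw [add_zero] at h
  exact left_eq_add.mp h

lemma Dneg (x : Q.V) (c : Q.C) : Q.D x (-c) = -(Q.D x c) := by
  have h := Q.Dadd x c (-c)
  rw [add_neg_cancel, Dzero] at h
  exact (neg_eq_of_add_eq_zero_right h.symm).symm

lemma Dsub (x : Q.V) (c d : Q.C) : Q.D x (c - d) = Q.D x c - Q.D x d := by
  rw [sub_eq_add_neg, Q.Dadd, Dneg, sub_eq_add_neg]

lemma Dnsmul (x : Q.V) (k : ℕ) (c : Q.C) : Q.D x (k • c) = k • Q.D x c := by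
  induction k with
  | zero => simp [Dzero]
  | succ k ih => rw [succ_nsmul, succ_nsmul, Q.Dadd, ih]

lemma gswap (a b : Q.V) : Q.g a (Q.P b) = Q.g (Q.P a) b := by
  rw [← Q.Piso (Q.P a) b, Q.Pinvol]

lemma gext (a b : Q.V) (h : ∀ v, Q.g a v = Q.g b v) : a = b := by
  rw [Q.frame_span a, Q.frame_span b]
  congr 1
  funext i
  rw [Q.gSymm _ a, Q.gSymm _ b, h (Q.e' i)]

lemma Dmul (x a b c d : Q.V) :
    Q.D x (Q.g a b * Q.g c d) =
      (Q.g (Q.nabla x a) b + Q.g a (Q.nabla x b)) * Q.g c d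
        + Q.g a b * (Q.g (Q.nabla x c) d + Q.g c (Q.nabla x d)) := by
  have h1 : Q.g a b * Q.g c d = Q.g a (Q.g c d • b) := by
    rw [map_smul, smul_eq_mul]; ring
  rw [h1, Q.nabla_metric, Q.nabla_leibniz, Q.nabla_metric x c d]
  simp only [map_add, map_smul, smul_eq_mul]
  ring

lemma contract (u v : Q.V) :
    (∑ i, Q.g (Q.e' i) u * Q.g v (Q.e i)) = Q.g v u := by
  have h : ∀ i : Fin m, Q.g (Q.e' i) u * Q.g v (Q.e i) = Q.g v (Q.g (Q.e' i) u • Q.e i) := by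
    intro i; rw [map_smul, smul_eq_mul]
  rw [Finset.sum_congr rfl (fun i _ => h i), ← map_sum, ← Q.frame_span u]

lemma sum_diag : (∑ i, Q.g (Q.e' i) (Q.e i)) = (m : Q.C) := by
  simp [Q.dual_frame]

end RAPMaux

namespace RAPMaux
open RAPM

variable {m : ℕ} (Q : RAPM m)

lemma Rm_swap12 (x y z w : Q.V) : Q.Rm x y z w = -(Q.Rm y x z w) := by
  unfold Rm R
  have hb : Q.bracket y x = -(Q.bracket x y) := by
    rw [← Q.torsion_free, ← Q.torsion_free]; abel
  rw [hb, nneg1]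
  simp only [map_sub, map_neg, LinearMap.sub_apply, LinearMap.neg_apply]
  ring

lemma Rm_swap34 (x y z w : Q.V) : Q.Rm x y z w = -(Q.Rm x y w z) := by
  have h := Q.bracketD x y (Q.g z w)
  rw [Q.nabla_metric y z w, Q.nabla_metric x z w] at h
  rw [Q.Dadd x, Q.Dadd y] at h
  rw [Q.nabla_metric x (Q.nabla y z) w, Q.nabla_metric x z (Q.nabla y w),
    Q.nabla_metric y (Q.nabla x z) w, Q.nabla_metric y z (Q.nabla x w),
    Q.nabla_metric (Q.bracket x y) z w] at h
  unfold Rm R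
  simp only [map_sub, LinearMap.sub_apply]
  rw [Q.gSymm (Q.nabla x (Q.nabla y w)) z, Q.gSymm (Q.nabla y (Q.nabla x w)) z,
    Q.gSymm (Q.nabla (Q.bracket x y) w) z]
  linear_combination -h

lemma bianchiV (x y z : Q.V) : Q.R x y z + Q.R y z x + Q.R z x y = 0 := by
  have hb : ∀ a b : Q.V, Q.bracket a b = Q.nabla a b - Q.nabla b a :=
    fun a b => (Q.torsion_free a b).symm
  have key : Q.R x y z + Q.R y z x + Q.R z x y =
      Q.bracket x (Q.bracket y z) + Q.bracket y (Q.bracket z x)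
        + Q.bracket z (Q.bracket x y) := by
    unfold R
    simp only [hb, nsub1, nsub2]
    abel
  rw [key, Q.jacobi]

lemma Rm_bianchi (x y z w : Q.V) : Q.Rm x y z w + Q.Rm y z x w + Q.Rm z x y w = 0 := by
  unfold Rm
  have h := bianchiV Q x y z
  calc (Q.g (Q.R x y z)) w + (Q.g (Q.R y z x)) w + (Q.g (Q.R z x y)) w
      = (Q.g (Q.R x y z + Q.R y z x + Q.R z x y)) w := by
        simp only [map_add, LinearMap.add_apply]
    _ = 0 := by rw [h]; simp

lemma Rm_curvatureLike : Q.curvatureLike Q.Rm :=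
  ⟨Rm_swap12 Q, Rm_swap34 Q, Rm_bianchi Q⟩

lemma nablaF_eq (x y z w : Q.V) :
    Q.nablaF x y z w =
      Q.g (Q.nabla x (Q.nabla y (Q.P z) - Q.P (Q.nabla y z))) w
        - Q.F (Q.nabla x y) z w - Q.F y (Q.nabla x z) w := by
  unfold nablaF F
  rw [Q.nabla_metric x (Q.nabla y (Q.P z) - Q.P (Q.nabla y z)) w]
  ring

lemma claimA (x y z : Q.V) :
    Q.R x y (Q.P z) =
      Q.P (Q.R x y z)
        + (Q.nabla x (Q.nabla y (Q.P z) - Q.P (Q.nabla y z))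
            - Q.nabla y (Q.nabla x (Q.P z) - Q.P (Q.nabla x z))
            + (Q.nabla x (Q.P (Q.nabla y z)) - Q.P (Q.nabla x (Q.nabla y z)))
            - (Q.nabla y (Q.P (Q.nabla x z)) - Q.P (Q.nabla y (Q.nabla x z)))
            - (Q.nabla (Q.bracket x y) (Q.P z) - Q.P (Q.nabla (Q.bracket x y) z))) := by
  unfold R
  simp only [map_sub, nsub2]
  abel

lemma L1 (x y z w : Q.V) :
    Q.Rm x y (Q.P z) (Q.P w) - Q.Rm x y z w =
      Q.nablaF x y z (Q.P w) - Q.nablaF y x z (Q.P w) := by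
  rw [nablaF_eq Q x y z (Q.P w), nablaF_eq Q y x z (Q.P w)]
  unfold Rm F
  rw [claimA]
  have hb : Q.bracket x y = Q.nabla x y - Q.nabla y x := (Q.torsion_free x y).symm
  rw [hb]
  simp only [map_add, map_sub, LinearMap.add_apply, LinearMap.sub_apply, nsub1, Q.Piso]
  ring

end RAPMaux

namespace RAPMaux
open RAPM

variable {n : ℕ} (Q : RAPM (2*n)) (Ω : Q.V)

/-- The coefficient `1/(2n)` as an element of `C`. -/
noncomputable def kap : Q.C := algebraMap ℝ Q.C ((1:ℝ)/((2*n : ℕ) : ℝ))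

def Gc (a b : Q.V) : Q.C := Q.g a b + Q.g a (Q.P b)

/-- Twice the tensor `A'` whose vanishing is the P-tensor condition. -/
noncomputable def Ap2 (a b : Q.V) : Q.C :=
  2 * Q.g (Q.nabla a Ω) b - 2 * kap Q * (Q.g Ω a * Q.g Ω b)
    + kap Q * (Q.g Ω Ω * Gc Q a b)

section W3sec
variable (hn : 0 < n) (hW : Q.W3) (hΩ : ∀ x, Q.g Ω x = Q.theta x)

include hW hΩ in
lemma hW1 : ∀ a b c, Q.F a b c =
    kap Q * ((Q.g a b + Q.g a (Q.P b)) * Q.g Ω c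
      + (Q.g a c + Q.g a (Q.P c)) * Q.g Ω b) := by
  intro a b c
  rw [hW.1 a b c, hΩ, hΩ, kap, Algebra.smul_def]

include hW hΩ in
lemma thetaP : ∀ v, Q.g Ω (Q.P v) = -(Q.g Ω v) := by
  intro v
  rw [hΩ, hΩ, hW.2]

include hW hΩ in
lemma POmega : Q.P Ω = -Ω := by
  apply gext
  intro v
  rw [map_neg, LinearMap.neg_apply, ← gswap, thetaP Q Ω hW hΩ]

include hn in
lemma DK (x : Q.V) (c : Q.C) : Q.D x (kap Q * c) = kap Q * Q.D x c := by
  have h2n : ((2*n : ℕ) : ℝ) ≠ 0 := Nat.cast_ne_zero.mpr (by omega)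
  have key : ∀ d : Q.C, (2*n : ℕ) • (kap Q * d) = d := by
    intro d
    rw [kap, ← Algebra.smul_def, ← Nat.cast_smul_eq_nsmul ℝ, smul_smul,
      mul_one_div_cancel h2n, one_smul]
  have e1 : Q.D x c = (2*n : ℕ) • Q.D x (kap Q * c) := by
    conv_lhs => rw [← key c]
    exact Dnsmul Q x _ _
  rw [e1, mul_smul_comm, key]

include hW hΩ in
lemma gPN (u x z : Q.V) : Q.g u (Q.P (Q.nabla x z)) =
    Q.g u (Q.nabla x (Q.P z))
      - kap Q * ((Q.g x z + Q.g x (Q.P z)) * Q.g Ω u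
          + (Q.g x u + Q.g x (Q.P u)) * Q.g Ω z) := by
  have h := hW1 Q Ω hW hΩ x z u
  unfold F at h
  simp only [map_sub, LinearMap.sub_apply] at h
  rw [Q.gSymm u (Q.P (Q.nabla x z)), Q.gSymm u (Q.nabla x (Q.P z))]
  linear_combination -h

include hW hΩ in
lemma gNOP (x w : Q.V) : Q.g (Q.nabla x Ω) (Q.P w) =
    -(Q.g (Q.nabla x Ω) w)
      - kap Q * ((Q.g x w + Q.g x (Q.P w)) * Q.g Ω Ω) := by
  have h := hW1 Q Ω hW hΩ x Ω w
  unfold F at h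
  rw [POmega Q Ω hW hΩ] at h
  simp only [map_neg, map_sub, LinearMap.sub_apply, LinearMap.neg_apply, nneg2] at h
  rw [gswap]
  linear_combination -h

end W3sec
end RAPMaux

namespace RAPMaux
open RAPM

variable {n : ℕ} (Q : RAPM (2*n)) (Ω : Q.V)
variable (hn : 0 < n) (hW : Q.W3) (hΩ : ∀ x, Q.g Ω x = Q.theta x)

include hn hW hΩ in
lemma L2 (x y z w : Q.V) :
    Q.nablaF x y z w =
      kap Q * ((Q.g y z + Q.g y (Q.P z)) * Q.g (Q.nabla x Ω) w
        + (Q.g y w + Q.g y (Q.P w)) * Q.g (Q.nabla x Ω) z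
        + (Q.g y (Q.nabla x (Q.P z)) - Q.g y (Q.P (Q.nabla x z))) * Q.g Ω w
        + (Q.g y (Q.nabla x (Q.P w)) - Q.g y (Q.P (Q.nabla x w))) * Q.g Ω z) := by
  have h1 := hW1 Q Ω hW hΩ
  unfold nablaF
  simp only [h1]
  rw [DK Q hn]
  simp only [add_mul, Q.Dadd, Dmul Q]
  ring

end RAPMaux

namespace RAPMaux
open RAPM

variable {n : ℕ} (Q : RAPM (2*n)) (Ω : Q.V)
variable (hn : 0 < n) (hW : Q.W3) (hΩ : ∀ x, Q.g Ω x = Q.theta x)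

include hn hW hΩ in
lemma L3 (x y z w : Q.V) :
    2 * (Q.Rm x y (Q.P z) (Q.P w) - Q.Rm x y z w) =
      kap Q * (Gc Q x z * Ap2 Q Ω y w - Gc Q y z * Ap2 Q Ω x w
        + Gc Q y w * Ap2 Q Ω x z - Gc Q x w * Ap2 Q Ω y z) := by
  have h1 := L1 Q x y z w
  have h2 := L2 Q Ω hn hW hΩ x y z (Q.P w)
  have h3 := L2 Q Ω hn hW hΩ y x z (Q.P w)
  simp only [Q.Pinvol, thetaP Q Ω hW hΩ, gNOP Q Ω hW hΩ, gPN Q Ω hW hΩ] at h2 h3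
  have hs : Q.g x y + Q.g x (Q.P y) = Q.g y x + Q.g y (Q.P x) := by
    rw [Q.gSymm x y, gswap Q x y, Q.gSymm (Q.P x) y]
  unfold Ap2 Gc
  linear_combination 2*h1 + 2*h2 - 2*h3 - (4*kap Q*kap Q*Q.g Ω z*Q.g Ω w) * hs

end RAPMaux

namespace RAPMaux
open RAPM

variable {n : ℕ} (Q : RAPM (2*n)) (Ω : Q.V)

noncomputable def gam (a : Q.V) : Q.V :=
  (2 : Q.C) • Q.nabla a Ω - (2 * kap Q * Q.g Ω a) • Ω
    + (kap Q * Q.g Ω Ω) • (a + Q.P a)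

lemma Ap2g (a b : Q.V) : Ap2 Q Ω a b = Q.g (gam Q Ω a) b := by
  unfold gam Ap2 Gc
  simp only [map_add, map_sub, map_smul, LinearMap.add_apply, LinearMap.sub_apply,
    LinearMap.smul_apply, smul_eq_mul]
  rw [← gswap]
  ring

lemma cancel2 (c : Q.C) (h : c + c = 0) : c = 0 := by
  have h2 : (2:ℝ) • c = 0 := by rw [two_smul]; exact h
  have : c = ((1:ℝ)/2) • ((2:ℝ) • c) := by rw [smul_smul]; norm_num
  rw [this, h2, smul_zero]

section hyp
variable (hn : 0 < n) (hW : Q.W3) (hθ : Q.closed)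
variable (hΩ : ∀ x, Q.g Ω x = Q.theta x) (htr : Q.trP = 0)

include hn in
lemma cancel2n (c : Q.C) (h : ((2*n : ℕ) : Q.C) * c = 0) : c = 0 := by
  have h2n : ((2*n : ℕ) : ℝ) ≠ 0 := Nat.cast_ne_zero.mpr (by omega)
  have e : ((2*n : ℕ) : Q.C) = algebraMap ℝ Q.C ((2*n : ℕ) : ℝ) := by
    rw [map_natCast]
  have : c = ((1:ℝ)/((2*n:ℕ):ℝ)) • (((2*n : ℕ) : Q.C) * c) := by
    rw [e, ← Algebra.smul_def, smul_smul, one_div_mul_cancel h2n, one_smul]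
  rw [this, h, smul_zero]

include hn in
lemma cancelK (c : Q.C) (h : kap Q * c = 0) : c = 0 := by
  have h2n : ((2*n : ℕ) : ℝ) ≠ 0 := Nat.cast_ne_zero.mpr (by omega)
  have key : (2*n : ℕ) • (kap Q * c) = c := by
    rw [kap, ← Algebra.smul_def, ← Nat.cast_smul_eq_nsmul ℝ, smul_smul,
      mul_one_div_cancel h2n, one_smul]
  rw [← key, h, smul_zero]

include hΩ in
lemma ntheta (a b : Q.V) : Q.nablaTheta a b = Q.g (Q.nabla a Ω) b := by
  unfold nablaTheta
  simp only [← hΩ]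
  rw [Q.nabla_metric]
  ring

include hθ hΩ in
lemma Ap2symm (a b : Q.V) : Ap2 Q Ω a b = Ap2 Q Ω b a := by
  have h := hθ a b
  rw [ntheta Q Ω hΩ, ntheta Q Ω hΩ] at h
  have hs : Q.g a b + Q.g a (Q.P b) = Q.g b a + Q.g b (Q.P a) := by
    rw [Q.gSymm a b, gswap Q a b, Q.gSymm (Q.P a) b]
  unfold Ap2 Gc
  linear_combination 2*h + (kap Q * Q.g Ω Ω)*hs

include hW hΩ in
lemma Ap2P (a b : Q.V) : Ap2 Q Ω a (Q.P b) = -(Ap2 Q Ω a b) := by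
  unfold Ap2 Gc
  rw [gNOP Q Ω hW hΩ, thetaP Q Ω hW hΩ, Q.Pinvol]
  ring

include hn hW hθ hΩ htr in
lemma ApZero
    (hE : ∀ x y z w, Gc Q x z * Ap2 Q Ω y w - Gc Q y z * Ap2 Q Ω x w
      + Gc Q y w * Ap2 Q Ω x z - Gc Q x w * Ap2 Q Ω y z = 0) :
    ∀ y z, Ap2 Q Ω y z = 0 := by
  have hGdiag : (∑ i, Gc Q (Q.e' i) (Q.e i)) = ((2*n : ℕ) : Q.C) := by
    unfold Gc
    rw [Finset.sum_add_distrib, sum_diag]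
    have e : (∑ i, Q.g (Q.e' i) (Q.P (Q.e i))) = Q.trP := rfl
    rw [e, htr, add_zero]
  have T : ∀ y z, ((2*n:ℕ) : Q.C) * Ap2 Q Ω y z
      = -(Gc Q y z * (∑ i, Ap2 Q Ω (Q.e' i) (Q.e i))) := by
    intro y z
    have h0 : (∑ i, (Gc Q (Q.e' i) z * Ap2 Q Ω y (Q.e i)
        - Gc Q y z * Ap2 Q Ω (Q.e' i) (Q.e i)
        + Gc Q y (Q.e i) * Ap2 Q Ω (Q.e' i) z
        - Gc Q (Q.e' i) (Q.e i) * Ap2 Q Ω y z)) = 0 :=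
      Finset.sum_eq_zero (fun i _ => hE (Q.e' i) y z (Q.e i))
    have p1 : (∑ i, Gc Q (Q.e' i) z * Ap2 Q Ω y (Q.e i)) = 0 := by
      have e : ∀ i : Fin (2*n), Gc Q (Q.e' i) z * Ap2 Q Ω y (Q.e i)
          = Q.g (Q.e' i) (z + Q.P z) * Q.g (gam Q Ω y) (Q.e i) := by
        intro i
        rw [Ap2g]
        have : Gc Q (Q.e' i) z = Q.g (Q.e' i) (z + Q.P z) := by
          unfold Gc; rw [map_add]
        rw [this]
      rw [Finset.sum_congr rfl (fun i _ => e i), contract, map_add, ← Ap2g, ← Ap2g,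
        Ap2P Q Ω hW hΩ]
      ring
    have p3 : (∑ i, Gc Q y (Q.e i) * Ap2 Q Ω (Q.e' i) z) = 0 := by
      have e : ∀ i : Fin (2*n), Gc Q y (Q.e i) * Ap2 Q Ω (Q.e' i) z
          = Q.g (Q.e' i) (gam Q Ω z) * Q.g (y + Q.P y) (Q.e i) := by
        intro i
        rw [Ap2symm Q Ω hθ hΩ, Ap2g, Q.gSymm (gam Q Ω z) (Q.e' i)]
        have : Gc Q y (Q.e i) = Q.g (y + Q.P y) (Q.e i) := by
          unfold Gc
          rw [gswap, map_add, LinearMap.add_apply]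
        rw [this]
        ring
      rw [Finset.sum_congr rfl (fun i _ => e i), contract,
        Q.gSymm (y + Q.P y) (gam Q Ω z), map_add, ← Ap2g, ← Ap2g, Ap2P Q Ω hW hΩ]
      ring
    rw [Finset.sum_sub_distrib, Finset.sum_add_distrib, Finset.sum_sub_distrib,
      p1, p3, ← Finset.mul_sum, ← Finset.sum_mul, hGdiag] at h0
    linear_combination -h0
  have ha : (∑ i, Ap2 Q Ω (Q.e' i) (Q.e i)) = 0 := by
    have h1 : ((2*n:ℕ):Q.C) * (∑ i, Ap2 Q Ω (Q.e' i) (Q.e i))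
        = -(((2*n:ℕ):Q.C) * (∑ i, Ap2 Q Ω (Q.e' i) (Q.e i))) := by
      calc ((2*n:ℕ):Q.C) * (∑ i, Ap2 Q Ω (Q.e' i) (Q.e i))
          = ∑ i, ((2*n:ℕ):Q.C) * Ap2 Q Ω (Q.e' i) (Q.e i) := Finset.mul_sum _ _ _
        _ = ∑ i, -(Gc Q (Q.e' i) (Q.e i) * (∑ j, Ap2 Q Ω (Q.e' j) (Q.e j))) :=
            Finset.sum_congr rfl (fun i _ => T (Q.e' i) (Q.e i))
        _ = -((∑ i, Gc Q (Q.e' i) (Q.e i)) * (∑ j, Ap2 Q Ω (Q.e' j) (Q.e j))) := by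
            rw [Finset.sum_neg_distrib, Finset.sum_mul]
        _ = -(((2*n:ℕ):Q.C) * (∑ j, Ap2 Q Ω (Q.e' j) (Q.e j))) := by rw [hGdiag]
    have h2 : ((2*n:ℕ):Q.C) * ((∑ i, Ap2 Q Ω (Q.e' i) (Q.e i))
        + (∑ i, Ap2 Q Ω (Q.e' i) (Q.e i))) = 0 := by
      linear_combination h1
    exact cancel2 Q _ (cancel2n Q hn _ h2)
  intro y z
  have h := T y z
  rw [ha, mul_zero, neg_zero] at h
  exact cancel2n Q hn _ h

end hyp
end RAPMaux

open RAPMaux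

open RAPM in
/-- On a `W̄₃`-manifold of dimension `2n` with closed `θ`, `R` is a Riemannian
P-tensor iff `A(y,z) = -(θ(Ω)/4n)[g(y,z)+g(y,Pz)]`. -/
theorem statement16 {n : ℕ} (hn : 0 < n) (Q : RAPM (2*n)) (htr : Q.trP = 0)
    (hW : Q.W3) (hθ : Q.closed) (Ω : Q.V) (hΩ : ∀ x, Q.g Ω x = Q.theta x)
    (A : Q.V → Q.V → Q.C)
    (hA : ∀ y z, A y z =
      Q.nablaTheta y z - ((1 : ℝ)/(2*(n : ℝ))) • (Q.theta y * Q.theta z)) :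
    Q.isPtensor Q.Rm ↔
      ∀ y z, A y z =
        - (((1 : ℝ)/(4*(n : ℝ))) •
          (Q.theta Ω * (Q.g y z + Q.g y (Q.P z)))) := by
  have hne : (n:ℝ) ≠ 0 := Nat.cast_ne_zero.mpr (by omega)
  have hk2 : ∀ c : Q.C, ((1:ℝ)/(2*(n:ℝ))) • c = kap Q * c := by
    intro c
    rw [kap, ← Algebra.smul_def]
    congr 1
    push_cast
    ring
  have h4 : ∀ d : Q.C, 2*(((1:ℝ)/(4*(n:ℝ))) • d) = kap Q * d := by
    intro d
    rw [← hk2 d]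
    rw [show (2:Q.C) = algebraMap ℝ Q.C 2 from (map_ofNat _ 2).symm]
    rw [Algebra.smul_def, Algebra.smul_def, ← mul_assoc, ← map_mul]
    congr 2
    field_simp
    ring
  have hb : ∀ y z, Ap2 Q Ω y z
      = 2*(A y z) + kap Q * (Q.g Ω Ω * (Q.g y z + Q.g y (Q.P z))) := by
    intro y z
    rw [hA y z, ntheta Q Ω hΩ]
    simp only [← hΩ]
    rw [hk2]
    unfold Ap2 Gc
    ring
  have hcond : (∀ y z, A y z =
      - (((1 : ℝ)/(4*(n : ℝ))) • (Q.theta Ω * (Q.g y z + Q.g y (Q.P z)))))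
      ↔ (∀ y z, Ap2 Q Ω y z = 0) := by
    constructor
    · intro h y z
      rw [hb, h y z]
      simp only [← hΩ]
      rw [mul_neg, h4]
      ring
    · intro h y z
      have e := hb y z
      rw [h y z] at e
      simp only [← hΩ]
      have h4' := h4 (Q.g Ω Ω * (Q.g y z + Q.g y (Q.P z)))
      have e2 : (A y z + ((1:ℝ)/(4*(n:ℝ))) • (Q.g Ω Ω * (Q.g y z + Q.g y (Q.P z))))
          + (A y z + ((1:ℝ)/(4*(n:ℝ))) • (Q.g Ω Ω * (Q.g y z + Q.g y (Q.P z)))) = 0 := by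
        linear_combination -e + h4'
      exact eq_neg_of_add_eq_zero_left (cancel2 Q _ e2)
  rw [hcond]
  constructor
  · intro hPt y z
    refine ApZero Q Ω hn hW hθ hΩ htr ?_ y z
    intro a b c d
    have l3 := L3 Q Ω hn hW hΩ a b c d
    rw [hPt.2 a b c d] at l3
    have h0 : kap Q * (Gc Q a c * Ap2 Q Ω b d - Gc Q b c * Ap2 Q Ω a d
        + Gc Q b d * Ap2 Q Ω a c - Gc Q a d * Ap2 Q Ω b c) = 0 := by
      linear_combination -l3
    exact cancelK Q hn _ h0
  · intro hz
    refine ⟨Rm_curvatureLike Q, ?_⟩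
    intro x y z w
    have l3 := L3 Q Ω hn hW hΩ x y z w
    simp only [hz] at l3
    have h2 : (Q.Rm x y (Q.P z) (Q.P w) - Q.Rm x y z w)
        + (Q.Rm x y (Q.P z) (Q.P w) - Q.Rm x y z w) = 0 := by
      linear_combination l3
    exact sub_eq_zero.mp (cancel2 Q _ h2)
end
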